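/- Let ξ_1,…,ξ_N be independent, identically distributed Gaussian random variables with mean 0 and variance σ² > 0. Then for every η ≥ 0, P( Σ_{i=1}^N ξ_i² ≥ σ² ( N + 2√(Nη) + 2η ) ) ≤ exp(−η). -/

import Mathlib

open MeasureTheory ProbabilityTheory Real
open scoped NNReal ENNReal

lemma quad_le_exp {u : ℝ} (hu : 0 ≤ u) : 1 + 2*u + 2*u^2 ≤ Real.exp (2*u) := by
  have h := Real.sum_le_exp_of_nonneg (by linarith : (0:ℝ) ≤ 2*u) 3
  refine le_trans ?_ h
  rw [Finset.sum_range_succ, Finset.sum_range_succ, Finset.sum_range_succ]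
  simp [Nat.factorial]
  ring_nf
  nlinarith [sq_nonneg u]

lemma integrable_exp_sq_gaussian (v : ℝ≥0) (hv : v ≠ 0) {t : ℝ} (ht : 2*t*(v:ℝ) < 1) :
    Integrable (fun x => Real.exp (t * x^2)) (gaussianReal 0 v) := by
  have hv' : (0:ℝ) < v := lt_of_le_of_ne v.coe_nonneg (by exact_mod_cast hv.symm)
  rw [gaussianReal_of_var_ne_zero _ hv]
  rw [integrable_withDensity_iff (measurable_gaussianPDF 0 v) (ae_of_all _ fun x => ENNReal.ofReal_lt_top)]
  have hb : (0:ℝ) < 1/(2*v) - t := by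
    rw [sub_pos, lt_div_iff₀ (by positivity)]
    linarith [ht]
  have : (fun x : ℝ => Real.exp (t * x^2) * (gaussianPDF 0 v x).toReal)
      = fun x : ℝ => (Real.sqrt (2 * π * v))⁻¹ * Real.exp (-(1/(2*v) - t) * x^2) := by
    ext x
    rw [gaussianPDF_def, ENNReal.toReal_ofReal (gaussianPDFReal_nonneg 0 v x),
      gaussianPDFReal_def]
    simp only
    rw [mul_comm, mul_assoc, ← Real.exp_add]
    congr 2
    field_simp
    ring
  rw [this]
  exact (integrable_exp_neg_mul_sq hb).const_mul _

lemma integral_exp_sq_gaussian (v : ℝ≥0) (hv : v ≠ 0) {t : ℝ} (ht : 2*t*(v:ℝ) < 1) :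
    ∫ x, Real.exp (t * x^2) ∂(gaussianReal 0 v) = (Real.sqrt (1 - 2*t*v))⁻¹ := by
  have hv' : (0:ℝ) < v := lt_of_le_of_ne v.coe_nonneg (by exact_mod_cast hv.symm)
  have hb : (0:ℝ) < 1/(2*v) - t := by
    rw [sub_pos, lt_div_iff₀ (by positivity)]
    linarith [ht]
  rw [gaussianReal_of_var_ne_zero _ hv]
  have hmeq : (Measure.withDensity volume (gaussianPDF 0 v))
      = Measure.withDensity volume (fun x => ((gaussianPDFReal 0 v x).toNNReal : ℝ≥0∞)) := by
    congr 1
  rw [hmeq, integral_withDensity_eq_integral_smul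
    ((measurable_gaussianPDFReal 0 v).real_toNNReal) _]
  have : (fun x : ℝ => (gaussianPDFReal 0 v x).toNNReal • Real.exp (t * x^2))
      = fun x : ℝ => (Real.sqrt (2 * π * v))⁻¹ * Real.exp (-(1/(2*v) - t) * x^2) := by
    ext x
    rw [NNReal.smul_def, smul_eq_mul, Real.coe_toNNReal _ (gaussianPDFReal_nonneg 0 v x),
      gaussianPDFReal_def]
    simp only
    rw [mul_assoc, ← Real.exp_add]
    congr 2
    field_simp
    ring
  rw [this, integral_const_mul, integral_gaussian]
  have hne : (1 : ℝ) - 2*t*v ≠ 0 := by nlinarith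
  have h2 : π / (1/(2*(v:ℝ)) - t) = (2*π*(v:ℝ)) * ((1:ℝ) - 2*t*v)⁻¹ := by
    rw [div_eq_iff hb.ne']
    field_simp
    have hX : (1 - 2*t*(v:ℝ))⁻¹ * (1 - 2*t*v) = 1 := inv_mul_cancel₀ hne
    linear_combination (-1:ℝ) * hX
  rw [h2, Real.sqrt_mul (by positivity : (0:ℝ) ≤ 2*π*(v:ℝ)) (((1:ℝ)-2*t*(v:ℝ))⁻¹),
    Real.sqrt_inv, ← mul_assoc, inv_mul_cancel₀ (by positivity), one_mul]

theorem gaussian_sum_squares_tail_bound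
    (N : ℕ)
    (Ω : Type*) [MeasurableSpace Ω] (P : Measure Ω) [IsProbabilityMeasure P]
    (σ2 : NNReal) (hσ2 : 0 < σ2)
    (ξ : Fin N → Ω → ℝ)
    (hmeas : ∀ i, Measurable (ξ i))
    (hindep : ProbabilityTheory.iIndepFun ξ P)
    (hgauss : ∀ i, P.map (ξ i) = gaussianReal 0 σ2)
    (η : ℝ) (hη : 0 ≤ η) :
    P {ω | (σ2 : ℝ) * ((N : ℝ) + 2 * Real.sqrt ((N : ℝ) * η) + 2 * η) ≤
        ∑ i, (ξ i ω) ^ 2} ≤ ENNReal.ofReal (Real.exp (-η)) := by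
  rcases hη.eq_or_lt with hη0 | hη0
  · -- η = 0 : trivial since RHS = 1
    rw [← hη0]
    simp only [neg_zero, Real.exp_zero, ENNReal.ofReal_one]
    exact prob_le_one
  rcases Nat.eq_zero_or_pos N with hN | hN
  · -- N = 0 : the event is empty
    subst hN
    convert (zero_le : 0 ≤ ENNReal.ofReal (Real.exp (-η)))
    rw [← measure_empty (μ := P)]
    congr 1
    ext ω
    simp only [Set.mem_setOf_eq, Set.mem_empty_iff_false, iff_false, not_le,
      Nat.cast_zero, Finset.univ_eq_empty, Finset.sum_empty, zero_mul,
      Real.sqrt_zero]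
    have hp : (0:ℝ) < (σ2:ℝ) := hσ2
    nlinarith
  -- main case
  have hv : σ2 ≠ 0 := hσ2.ne'
  have hv' : (0:ℝ) < σ2 := hσ2
  have hN' : (0:ℝ) < N := by exact_mod_cast hN
  set m : ℝ := (N : ℝ) + 2 * Real.sqrt ((N : ℝ) * η) + 2 * η with hm
  have hw : 0 ≤ Real.sqrt ((N:ℝ) * η) := Real.sqrt_nonneg _
  have hmN : (N:ℝ) ≤ m := by rw [hm]; linarith
  have hm0 : 0 < m := lt_of_lt_of_le hN' hmN
  set lam : ℝ := (m - N) / (2 * m) with hlam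
  have hlam0 : 0 ≤ lam := by
    apply div_nonneg <;> linarith
  have h1lam : 1 - 2 * lam = N / m := by
    rw [hlam]; field_simp; ring
  have hlamlt : 2 * lam < 1 := by
    rw [← sub_pos, h1lam]; positivity
  set t : ℝ := lam / σ2 with htdef
  have ht0 : 0 ≤ t := div_nonneg hlam0 hv'.le
  have htv : 2 * t * (σ2:ℝ) = 2 * lam := by
    rw [htdef]; field_simp
  have htv1 : 2 * t * (σ2:ℝ) < 1 := by rw [htv]; exact hlamlt
  set Xf : Fin N → Ω → ℝ := fun i ω => (ξ i ω) ^ 2 with hXf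
  have hmX : ∀ i, Measurable (Xf i) := fun i => (hmeas i).pow_const 2
  have hindep' : iIndepFun Xf P :=
    hindep.comp (fun _ x => x ^ 2) (fun _ => measurable_id.pow_const 2)
  have h_int : ∀ i, Integrable (fun ω => Real.exp (t * Xf i ω)) P := by
    intro i
    have h := integrable_exp_sq_gaussian σ2 hv htv1
    rw [← hgauss i] at h
    exact (integrable_map_measure
      (g := fun x : ℝ => Real.exp (t * x ^ 2))
      (show Measurable (fun x : ℝ => Real.exp (t * x ^ 2)) by fun_prop).aestronglyMeasurable
      (hmeas i).aemeasurable).mp h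
  have h_mgf : ∀ i, mgf (Xf i) P t = (Real.sqrt (1 - 2 * t * σ2))⁻¹ := by
    intro i
    rw [mgf, ← integral_exp_sq_gaussian σ2 hv htv1, ← hgauss i,
      integral_map (hmeas i).aemeasurable
        (show Measurable (fun x : ℝ => Real.exp (t * x ^ 2)) by fun_prop).aestronglyMeasurable]
  set ε : ℝ := (σ2 : ℝ) * m with hε
  have h_int_sum : Integrable (fun ω => Real.exp (t * (∑ i, Xf i) ω)) P :=
    hindep'.integrable_exp_mul_sum hmX (fun i _ => h_int i)
  have hcher := measure_ge_le_exp_mul_mgf (X := ∑ i, Xf i) (μ := P) (t := t)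
    ε ht0 h_int_sum
  rw [hindep'.mgf_sum hmX] at hcher
  simp only [h_mgf, Finset.prod_const, Finset.card_univ, Fintype.card_fin] at hcher
  have hset : {ω | ε ≤ (∑ i, Xf i) ω} =
      {ω | (σ2 : ℝ) * ((N : ℝ) + 2 * Real.sqrt ((N : ℝ) * η) + 2 * η) ≤
        ∑ i, (ξ i ω) ^ 2} := by
    ext ω
    simp [Finset.sum_apply, hXf, hε, hm]
  rw [hset] at hcher
  -- numeric bound
  have hkey : Real.exp (-t * ε) * ((Real.sqrt (1 - 2 * t * σ2))⁻¹) ^ N ≤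
      Real.exp (-η) := by
    have htε : t * ε = lam * m := by
      rw [htdef, hε]; field_simp
    have h12 : 1 - 2 * t * σ2 = (N:ℝ) / m := by rw [htv]; exact h1lam
    set u : ℝ := Real.sqrt (η / N) with hu
    have hu0 : 0 ≤ u := Real.sqrt_nonneg _
    have hu2 : u ^ 2 = η / N := Real.sq_sqrt (by positivity)
    have hwu : Real.sqrt ((N:ℝ) * η) = N * u := by
      rw [hu, ← Real.sqrt_sq hN'.le, ← Real.sqrt_mul (by positivity)]
      congr 1
      field_simp
      ring
      rw [Real.sq_sqrt (by positivity)]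
    have hmu : m / N = 1 + 2 * u + 2 * u ^ 2 := by
      rw [hm, hwu, hu2]; field_simp
    -- square both sides
    have hL0 : 0 ≤ Real.exp (-t * ε) * ((Real.sqrt (1 - 2 * t * σ2))⁻¹) ^ N := by
      positivity
    have hsq : (Real.exp (-t * ε) * ((Real.sqrt (1 - 2 * t * σ2))⁻¹) ^ N) ^ 2 ≤
        (Real.exp (-η)) ^ 2 := by
      have hinv : ((Real.sqrt (1 - 2 * t * σ2))⁻¹) ^ 2 = m / N := by
        rw [inv_pow, Real.sq_sqrt (by rw [h12]; positivity), h12, inv_div]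
      have hexp2 : ∀ x : ℝ, Real.exp x ^ 2 = Real.exp (2 * x) := fun x => by
        rw [sq, ← Real.exp_add]; ring_nf
      have hlm : 2 * (lam * m) = 2 * (N:ℝ) * u + 2 * η := by
        have : lam * m = (m - N) / 2 := by
          rw [hlam]; field_simp
        rw [this, hm, hwu]; ring
      have hpow : (m / N) ^ N ≤ Real.exp (2 * u) ^ N := by
        refine pow_le_pow_left₀ (by positivity) ?_ N
        rw [hmu]
        exact quad_le_exp hu0
      calc (Real.exp (-t * ε) * ((Real.sqrt (1 - 2 * t * σ2))⁻¹) ^ N) ^ 2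
          = Real.exp (-t * ε) ^ 2 * (((Real.sqrt (1 - 2 * t * σ2))⁻¹) ^ 2) ^ N := by
            ring
        _ = Real.exp (-(2 * (lam * m))) * (m / N) ^ N := by
            rw [hinv, hexp2, show (2:ℝ) * (-t * ε) = -(2 * (t * ε)) by ring, htε]
        _ ≤ Real.exp (-(2 * (lam * m))) * Real.exp (2 * u) ^ N :=
            mul_le_mul_of_nonneg_left hpow (Real.exp_nonneg _)
        _ = (Real.exp (-η)) ^ 2 := by
            rw [← Real.exp_nat_mul, ← Real.exp_add, hexp2]
            congr 1
            linarith [hlm]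
    calc Real.exp (-t * ε) * ((Real.sqrt (1 - 2 * t * σ2))⁻¹) ^ N
        = Real.sqrt ((Real.exp (-t * ε) * ((Real.sqrt (1 - 2 * t * σ2))⁻¹) ^ N) ^ 2) :=
          (Real.sqrt_sq hL0).symm
      _ ≤ Real.sqrt ((Real.exp (-η)) ^ 2) := Real.sqrt_le_sqrt hsq
      _ = Real.exp (-η) := Real.sqrt_sq (Real.exp_nonneg _)
  calc P _ = ENNReal.ofReal (P {ω | (σ2 : ℝ) * ((N : ℝ) + 2 * Real.sqrt ((N : ℝ) * η) + 2 * η) ≤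
        ∑ i, (ξ i ω) ^ 2}).toReal := (ENNReal.ofReal_toReal (measure_ne_top _ _)).symm
    _ ≤ ENNReal.ofReal (Real.exp (-t * ε) * ((Real.sqrt (1 - 2 * t * σ2))⁻¹) ^ N) :=
        ENNReal.ofReal_le_ofReal hcher
    _ ≤ ENNReal.ofReal (Real.exp (-η)) := ENNReal.ofReal_le_ofReal hkey
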